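/- Let y be a string over an alphabet Σ. For any characters a, b ∈ Σ and any string x ∈ Σ*, the string a·x·b is a minimal absent word of y if and only if x ∈ Substr(y) with x = Rrep_y(x), x·b ∈ Substr(y), a·x ∈ Substr(y), and a·x·b ∉ Substr(y). -/

import Mathlib

open List

/-- 1-indexed beginning positions of occurrences of `x` in `y`:
`BegPos y x = { i | 1 ≤ i ≤ |y| - |x| + 1, y[i..i+|x|-1] = x }`. -/
def BegPos {α : Type*} (y x : List α) : Set ℕ :=
  {i | 1 ≤ i ∧ i ≤ y.length - x.length + 1 ∧ x <+: y.drop (i - 1)}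

/-- 1-indexed ending positions of occurrences of `x` in `y`:
`EndPos y x = { i | |x| ≤ i ≤ |y|, y[i-|x|+1..i] = x }`. -/
def EndPos {α : Type*} (y x : List α) : Set ℕ :=
  {i | x.length ≤ i ∧ i ≤ y.length ∧ x <:+ y.take i}

/-- `IsLrepOf y w x` means `w = Lrep_y(x)`: `w` is left-equivalent to `x` in `y`
(`BegPos y w = BegPos y x`) and is the longest such string. -/
def IsLrepOf {α : Type*} (y w x : List α) : Prop :=
  BegPos y w = BegPos y x ∧ ∀ v : List α, BegPos y v = BegPos y x → v.length ≤ w.length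

/-- `IsRrepOf y w x` means `w = Rrep_y(x)`: `w` is right-equivalent to `x` in `y`
(`EndPos y w = EndPos y x`) and is the longest such string. -/
def IsRrepOf {α : Type*} (y w x : List α) : Prop :=
  EndPos y w = EndPos y x ∧ ∀ v : List α, EndPos y v = EndPos y x → v.length ≤ w.length

/-- `x` is a minimal absent word of `y`: `x` is not a substring of `y` and
every proper substring of `x` is a substring of `y`. -/
def IsMAW {α : Type*} (y x : List α) : Prop :=
  ¬ x <:+: y ∧ ∀ w : List α, w <:+: x → w ≠ x → w <:+: y


lemma exists_endpos' {α : Type*} {y w : List α} (h : w <:+: y) :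
    ∃ i, i ∈ EndPos y w := by
  obtain ⟨s, t, rfl⟩ := h
  refine ⟨s.length + w.length, le_add_self, by simp [List.length_append], ?_⟩
  have h1 : (s ++ w ++ t).take (s.length + w.length) = s ++ w := by
    rw [← List.length_append]; exact List.take_left
  rw [h1]; exact List.suffix_append s w

lemma mem_endpos_of_suffix' {α : Type*} {y u v : List α} {i : ℕ}
    (h : u <:+ v) (hi : i ∈ EndPos y v) : i ∈ EndPos y u :=
  ⟨le_trans h.length_le hi.1, hi.2.1, h.trans hi.2.2⟩

lemma key_lemma {α : Type*} {y : List α} {a b : α} {x v : List α}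
    (hax : (a :: x) <:+: y) (hxb : (x ++ [b]) <:+: y)
    (hv : EndPos y v = EndPos y x) (hlen : x.length < v.length) :
    (a :: (x ++ [b])) <:+: y := by
  -- Step 1: a :: x is a suffix of v
  obtain ⟨j, hj⟩ := exists_endpos' hax
  have hjx : j ∈ EndPos y x := mem_endpos_of_suffix' (List.suffix_cons a x) hj
  have hjv : j ∈ EndPos y v := by rw [hv]; exact hjx
  have haxv : (a :: x) <:+ v := by
    rcases List.suffix_or_suffix_of_suffix hj.2.2 hjv.2.2 with h | h
    · exact h
    · have hl := h.length_le
      simp only [List.length_cons] at hl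
      have : v = a :: x := h.eq_of_length (by simp; omega)
      rw [this]
  -- Step 2: x (hence v, hence a::x) ends at k-1 where x++[b] ends at k
  obtain ⟨k, hk⟩ := exists_endpos' hxb
  have hk1 : x.length + 1 ≤ k := by simpa using hk.1
  have hky : k ≤ y.length := hk.2.1
  obtain ⟨p, hp⟩ := hk.2.2
  have hplen : p.length + x.length + 1 = k := by
    have := congrArg List.length hp
    simp [List.length_take] at this
    omega
  have hkx : (k - 1) ∈ EndPos y x := by
    refine ⟨by omega, by omega, ?_⟩
    have h2 : y.take (k - 1) = (y.take k).take (k - 1) := by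
      rw [List.take_take]; congr 1; omega
    rw [h2, ← hp, ← List.append_assoc,
      show k - 1 = (p ++ x).length by simp; omega, List.take_left]
    exact List.suffix_append p x
  have hkv : (k - 1) ∈ EndPos y v := by rw [hv]; exact hkx
  have haxk : (a :: x) <:+ y.take (k - 1) := haxv.trans hkv.2.2
  -- Step 3: the letter of y at position k is b, combine
  have hget : y.take k = y.take (k - 1) ++ (y[k-1]?).toList := by
    rw [show k = (k - 1) + 1 by omega] at hp hky ⊢
    exact List.take_succ
  have hsome : y[k-1]? = some (y.get ⟨k - 1, by omega⟩) := by
    rw [List.getElem?_eq_getElem (by omega)]; rfl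
  set c := y.get ⟨k - 1, by omega⟩ with hc
  obtain ⟨q, hq⟩ := haxk
  have heq : (q ++ (a :: x)) ++ [c] = p ++ (x ++ [b]) := by
    rw [hq, hp, hget, hsome]; rfl
  have hcb : c = b := by
    have h3 := congrArg List.getLast? heq
    rw [← List.append_assoc p, List.getLast?_concat, List.getLast?_concat] at h3
    exact Option.some_injective _ h3
  have hsuf : (a :: (x ++ [b])) <:+ y.take k := by
    refine ⟨q, ?_⟩
    rw [hget, hsome, ← hq, hcb]
    simp
  exact hsuf.isInfix.trans (List.take_prefix k y).isInfix

theorem maw_iff_dawg_condition {α : Type*} (y : List α) (a b : α) (x : List α) :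
    IsMAW y (a :: (x ++ [b])) ↔
      x <:+: y ∧ IsRrepOf y x x ∧ (x ++ [b]) <:+: y ∧ (a :: x) <:+: y ∧
        ¬ (a :: (x ++ [b])) <:+: y := by
  constructor
  · rintro ⟨hno, hmin⟩
    have hax : (a :: x) <:+: y := by
      refine hmin _ ⟨[], [b], by simp⟩ ?_
      intro h; have := congrArg List.length h; simp at this
    have hxb : (x ++ [b]) <:+: y := by
      refine hmin _ ⟨[a], [], by simp⟩ ?_
      intro h; have := congrArg List.length h; simp at this
    have hx : x <:+: y := by
      refine hmin _ ⟨[a], [b], by simp⟩ ?_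
      intro h; have := congrArg List.length h; simp at this; omega
    refine ⟨hx, ⟨rfl, ?_⟩, hxb, hax, hno⟩
    intro v hv
    by_contra hlen
    push_neg at hlen
    exact hno (key_lemma hax hxb hv hlen)
  · rintro ⟨hx, -, hxb, hax, hno⟩
    refine ⟨hno, ?_⟩
    rintro w ⟨s, t, hst⟩ hne
    match s with
    | [] =>
      simp only [List.nil_append] at hst
      have ht : t ≠ [] := by
        rintro rfl
        simp only [List.append_nil] at hst
        exact hne hst
      have hwlen : w.length ≤ (a :: x).length := by
        have h1 := congrArg List.length hst
        have h2 : 1 ≤ t.length := List.length_pos_iff.mpr ht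
        simp at h1 ⊢
        omega
      have hw : w <+: a :: x := by
        have hpre : w <+: (a :: x) ++ [b] := ⟨t, by simpa using hst⟩
        have h3 := List.prefix_iff_eq_take.mp hpre
        rw [show (a :: x) ++ [b] = a :: (x ++ [b]) from rfl,
          ← show (a :: x) ++ [b] = a :: (x ++ [b]) from rfl,
          List.take_append_of_le_length hwlen] at h3
        rw [h3]; exact List.take_prefix _ _
      exact hw.isInfix.trans hax
    | c :: s' =>
      have h2 : s' ++ w ++ t = x ++ [b] := by
        have : c :: (s' ++ w ++ t) = a :: (x ++ [b]) := by simpa using hst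
        exact (List.cons.injEq _ _ _ _ ▸ this).2
      have h4 : w <:+: x ++ [b] := ⟨s', t, h2⟩
      exact h4.trans hxb
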